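/- Let X be a graph on n vertices with adjacency matrix A and vertex degrees d_1,...,d_n, possibly with loops. Let T = diag(t_1,...,t_n) be a diagonal matrix such that T + A is positive semidefinite. If S is an independent set of size s (no two distinct vertices of S adjacent) containing s_1 looped vertices, then (s^2/n^2)·Σ_{i∈V}(t_i + d_i) − (2s/n)·Σ_{i∈S}(t_i + d_i) + Σ_{i∈S} t_i ≥ −s_1. -/

import Mathlib

open Matrix Finset

/-- Lemma (genbound): general quadratic-form bound for independent sets in graphs
with loops, given a diagonal matrix `T = diagonal t` with `T + A` positive semidefinite. -/
theorem stmt0 (n : ℕ) (hn : 0 < n) (A : Matrix (Fin n) (Fin n) ℝ)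
    (hsym : A.IsSymm) (h01 : ∀ i j, A i j = 0 ∨ A i j = 1)
    (t : Fin n → ℝ)
    (hpsd : (Matrix.diagonal t + A).PosSemidef)
    (S : Finset (Fin n))
    (hind : ∀ i ∈ S, ∀ j ∈ S, i ≠ j → A i j = 0)
    (d : Fin n → ℝ) (hd : ∀ i, d i = ∑ j, A i j)
    (s s₁ : ℕ) (hs : s = S.card)
    (hs₁ : (s₁ : ℝ) = ∑ i ∈ S, A i i) :
    ((s : ℝ) ^ 2 / (n : ℝ) ^ 2) * (∑ i, (t i + d i))
      - 2 * ((s : ℝ) / n) * (∑ i ∈ S, (t i + d i))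
      + ∑ i ∈ S, t i ≥ -(s₁ : ℝ) := by
  set M := Matrix.diagonal t + A with hM
  set c : ℝ := (s : ℝ) / n with hc
  set z : Fin n → ℝ := fun i => if i ∈ S then (1:ℝ) else 0 with hz
  have hMapp : ∀ i j, M i j = (if i = j then t i else 0) + A i j := by
    intro i j
    simp [hM, Matrix.add_apply, Matrix.diagonal_apply]
  have hrow : ∀ i, ∑ j, M i j = t i + d i := by
    intro i
    simp [hMapp, Finset.sum_add_distrib, hd]
  have hcol : ∀ j, ∑ i, M i j = t j + d j := by
    intro j
    have : ∀ i, M i j = M j i := by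
      intro i
      simp only [hMapp]
      have hA : A i j = A j i := congrFun (congrFun hsym j) i
      by_cases h : i = j
      · subst h; simp
      · simp [h, Ne.symm h, hA]
    rw [Finset.sum_congr rfl (fun i _ => this i), hrow]
  have hrowS : ∀ i ∈ S, ∑ j ∈ S, M i j = t i + A i i := by
    intro i hi
    simp only [hMapp, Finset.sum_add_distrib]
    congr 1
    · simp [hi]
    · rw [Finset.sum_eq_single i]
      · intro j hj hne; exact hind i hi j hj (Ne.symm hne)
      · intro h; exact absurd hi h
  -- the four double sums
  have S1 : ∑ i, ∑ j, z i * M i j * z j = (∑ i ∈ S, t i) + (s₁ : ℝ) := by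
    have : ∀ i, ∑ j, z i * M i j * z j = if i ∈ S then ∑ j ∈ S, M i j else 0 := by
      intro i
      by_cases hi : i ∈ S
      · simp only [hz, hi, if_true, one_mul]
        simp only [mul_ite, mul_one, mul_zero, Finset.sum_ite_mem, Finset.univ_inter]
      · simp [hz, hi]
    rw [Finset.sum_congr rfl (fun i _ => this i)]
    simp only [Finset.sum_ite_mem, Finset.univ_inter]
    rw [Finset.sum_congr rfl hrowS, Finset.sum_add_distrib, hs₁]
  have S2 : ∑ i, ∑ j, z i * M i j = ∑ i ∈ S, (t i + d i) := by
    have : ∀ i, ∑ j, z i * M i j = if i ∈ S then t i + d i else 0 := by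
      intro i
      by_cases hi : i ∈ S <;> simp [hz, hi, ← Finset.mul_sum, hrow]
    rw [Finset.sum_congr rfl (fun i _ => this i)]
    simp only [Finset.sum_ite_mem, Finset.univ_inter]
  have S3 : ∑ i, ∑ j, M i j * z j = ∑ i ∈ S, (t i + d i) := by
    rw [Finset.sum_comm]
    have : ∀ j, ∑ i, M i j * z j = if j ∈ S then t j + d j else 0 := by
      intro j
      by_cases hj : j ∈ S <;> simp [hz, hj, ← Finset.sum_mul, hcol]
    rw [Finset.sum_congr rfl (fun j _ => this j)]
    simp only [Finset.sum_ite_mem, Finset.univ_inter]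
  have S4 : ∑ i, ∑ j, M i j = ∑ i, (t i + d i) := by
    exact Finset.sum_congr rfl (fun i _ => hrow i)
  have key := hpsd.dotProduct_mulVec_nonneg (fun i => z i - c)
  rw [star_trivial] at key
  have expand : (fun i => z i - c) ⬝ᵥ (M *ᵥ fun i => z i - c)
      = ((∑ i ∈ S, t i) + (s₁ : ℝ)) - c * (∑ i ∈ S, (t i + d i))
        - c * (∑ i ∈ S, (t i + d i)) + c^2 * (∑ i, (t i + d i)) := by
    simp only [dotProduct, Matrix.mulVec, Finset.mul_sum]
    have : ∀ i, ∀ j, (z i - c) * (M i j * (z j - c))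
        = z i * M i j * z j - c * (z i * M i j) - c * (M i j * z j) + c^2 * M i j := by
      intros; ring
    calc ∑ i, ∑ j, (z i - c) * (M i j * (z j - c))
        = ∑ i, ∑ j, (z i * M i j * z j - c * (z i * M i j) - c * (M i j * z j)
            + c^2 * M i j) := by
          exact Finset.sum_congr rfl (fun i _ => Finset.sum_congr rfl (fun j _ => this i j))
      _ = (∑ i, ∑ j, z i * M i j * z j) - c * (∑ i, ∑ j, z i * M i j)
            - c * (∑ i, ∑ j, M i j * z j) + c^2 * (∑ i, ∑ j, M i j) := by
          simp only [Finset.sum_add_distrib, Finset.sum_sub_distrib, ← Finset.mul_sum]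
      _ = _ := by rw [S1, S2, S3, S4]; simp only [Finset.mul_sum]
  rw [expand] at key
  have hcc : (s : ℝ) ^ 2 / (n : ℝ) ^ 2 = c ^ 2 := by rw [hc, div_pow]
  rw [hcc]
  linarith [key]
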